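/- Let W be a finite group acting on a set, and suppose to each g ∈ W and each 'bundle label' w ∈ W we assign F_g^w ∈ Hom(V, A) (A a commutative algebra) such that F_g^w = 0 unless g is a reflection, and the symmetry Σ_{hg=k} ⟨F_g^1, v⟩⟨F_h^g, gu⟩ = Σ_{hg=k} ⟨F_g^1, u⟩⟨F_h^g, gv⟩ holds for all k. If moreover for each reflection g the linear functional v ↦ ⟨F_g^w, v⟩ vanishes on ker(1−g), then also Σ_{hg=k} ⟨F_g^1, v⟩⟨F_h^g, u⟩ = Σ_{hg=k} ⟨F_g^1, u⟩⟨F_h^g, v⟩ for all k ∈ W. -/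
import Mathlib


open Finset

lemma aux_rank_one_factor
    (V : Type*) [AddCommGroup V] [Module ℂ V] [FiniteDimensional ℂ V]
    (A : Type*) [CommRing A] [Algebra ℂ A]
    (T : V →ₗ[ℂ] V) (hT : Module.finrank ℂ (LinearMap.range T) = 1)
    (φ ψ : V →ₗ[ℂ] A)
    (hφ : ∀ v : V, T v = 0 → φ v = 0) (hψ : ∀ v : V, T v = 0 → ψ v = 0)
    (u v : V) : φ v * ψ u = φ u * ψ v := by
  -- find e with T e ≠ 0
  have hT0 : T ≠ 0 := by
    intro h
    rw [h, LinearMap.range_zero] at hT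
    simp at hT
  obtain ⟨e, he⟩ : ∃ e : V, T e ≠ 0 := by
    by_contra h
    push_neg at h
    exact hT0 (LinearMap.ext fun x => by simpa using h x)
  have hspan : (Submodule.span ℂ {T e}) = LinearMap.range T := by
    apply Submodule.eq_of_le_of_finrank_le
    · rw [Submodule.span_le]
      rintro x rfl
      exact LinearMap.mem_range_self T e
    · rw [hT, finrank_span_singleton he]
  have hc : ∀ x : V, ∃ c : ℂ, T x = c • T e := by
    intro x
    have : T x ∈ Submodule.span ℂ {T e} := hspan ▸ LinearMap.mem_range_self T x
    obtain ⟨c, hc⟩ := Submodule.mem_span_singleton.mp this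
    exact ⟨c, hc.symm⟩
  obtain ⟨cu, hcu⟩ := hc u
  obtain ⟨cv, hcv⟩ := hc v
  have hval : ∀ (c : ℂ) (x : V), T x = c • T e →
      ∀ (θ : V →ₗ[ℂ] A), (∀ y : V, T y = 0 → θ y = 0) → θ x = c • θ e := by
    intro c x hx θ hθ
    have hker : T (x - c • e) = 0 := by simp [map_sub, hx]
    have := hθ _ hker
    rw [map_sub, map_smul, sub_eq_zero] at this
    exact this
  rw [hval cu u hcu φ hφ, hval cu u hcu ψ hψ, hval cv v hcv φ hφ, hval cv v hcv ψ hψ]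
  rw [smul_mul_smul_comm, smul_mul_smul_comm, mul_comm cv cu]

/-- Lemma 5.2(iv) of the paper.  Let `W` be a finite group acting linearly
on `V` via `ρ`, `A` a commutative algebra, and `F w g : V →ₗ ℂ → A` families with `F w g = 0`
unless `g` is a reflection (i.e. unless `Im(1 − ρ g)` is one-dimensional), vanishing on
`ker(1 − ρ g)`.  If the symmetry
`Σ_{hg=k} ⟨F_g¹, v⟩⟨F_h^g, gu⟩ = Σ_{hg=k} ⟨F_g¹, u⟩⟨F_h^g, gv⟩` holds for all `k`, then also
`Σ_{hg=k} ⟨F_g¹, v⟩⟨F_h^g, u⟩ = Σ_{hg=k} ⟨F_g¹, u⟩⟨F_h^g, v⟩` for all `k`. -/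
theorem symmetry_transfer_for_reflection_families
    (V : Type*) [AddCommGroup V] [Module ℂ V] [FiniteDimensional ℂ V]
    (A : Type*) [CommRing A] [Algebra ℂ A]
    (W : Type*) [Group W] [Fintype W]
    (ρ : W →* (V ≃ₗ[ℂ] V))
    (F : W → W → (V →ₗ[ℂ] A))
    (hsupp : ∀ w g : W,
      Module.finrank ℂ (LinearMap.range (1 - (ρ g : V →ₗ[ℂ] V))) ≠ 1 → F w g = 0)
    (hker : ∀ (w g : W) (v : V), ρ g v = v → F w g v = 0)
    (hiii : ∀ (k : W) (u v : V),
      ∑ g : W, F 1 g v * F g (k * g⁻¹) (ρ g u) = ∑ g : W, F 1 g u * F g (k * g⁻¹) (ρ g v)) :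
    ∀ (k : W) (u v : V),
      ∑ g : W, F 1 g v * F g (k * g⁻¹) u = ∑ g : W, F 1 g u * F g (k * g⁻¹) v := by
  intro k u v
  have key : ∀ g : W,
      F 1 g v * F g (k * g⁻¹) (u - ρ g u) = F 1 g u * F g (k * g⁻¹) (v - ρ g v) := by
    intro g
    by_cases hr : Module.finrank ℂ (LinearMap.range (1 - (ρ g : V →ₗ[ℂ] V))) = 1
    · set T : V →ₗ[ℂ] V := 1 - (ρ g : V →ₗ[ℂ] V) with hTdef
      have hTapp : ∀ x : V, T x = x - ρ g x := fun x => rfl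
      have h := aux_rank_one_factor V A T hr (F 1 g) ((F g (k * g⁻¹)).comp T)
        (fun x hx => by
          apply hker 1 g
          have h0 : x - ρ g x = 0 := by rw [← hTapp]; exact hx
          exact (sub_eq_zero.mp h0).symm)
        (fun x hx => by simp [LinearMap.comp_apply, hx]) u v
      · simpa [LinearMap.comp_apply, hTapp] using h
    · simp [hsupp 1 g hr]
  have expand : ∀ (a b : V),
      ∑ g : W, F 1 g a * F g (k * g⁻¹) b
        = (∑ g : W, F 1 g a * F g (k * g⁻¹) (ρ g b))
          + ∑ g : W, F 1 g a * F g (k * g⁻¹) (b - ρ g b) := by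
    intro a b
    rw [← Finset.sum_add_distrib]
    congr 1
    ext g
    rw [map_sub, mul_sub]
    ring
  rw [expand v u, expand u v, hiii k u v, Finset.sum_congr rfl fun g _ => key g]
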